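/- For meta-walks s and r in a database D and entities e, f, the number of walks of the concatenated meta-walk s⁻¹·s·r from e to f equals (number of walks of s ending at e, i.e., Σ_g |s(g, e, D)| counted with multiplicity as |s⁻¹·s(e, e, D)|) times |r(e, f, D)|, provided every walk of s⁻¹·s from e returns to e (which holds when the labels of s form a functional chain so that each walk of s⁻¹ from e has a unique continuation back). -/

import Mathlib

universe u v w

/-- A graph database: nodes, edges, a label for every node, and an optional
value for nodes (nodes with a value are "entities"). -/
structure GraphDB (Label : Type u) (Value : Type v) where
  V : Type w
  E : V → V → Prop
  lab : V → Label
  val : V → Option Value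

namespace GraphDB

variable {Label : Type u} {Value : Type v}

/-- A node is an entity iff it carries a value. -/
def isEntity (D : GraphDB Label Value) (x : D.V) : Prop := (D.val x).isSome

/-- Isomorphism of graph databases: a bijection of nodes preserving labels,
values, and edges. -/
def Iso (D D' : GraphDB Label Value) : Prop :=
  ∃ f : D.V ≃ D'.V,
    (∀ x, D'.lab (f x) = D.lab x) ∧
    (∀ x, D'.val (f x) = D.val x) ∧
    ∀ x y, D.E x y ↔ D'.E (f x) (f y)

/-- A (nonempty) walk: consecutive nodes are joined by edges. -/
def IsWalk (D : GraphDB Label Value) : List D.V → Prop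
  | [] => False
  | [_] => True
  | x :: y :: rest => D.E x y ∧ IsWalk D (y :: rest)

/-- The value of a walk: the subsequence of (label, value) pairs of its entity
nodes, in order. -/
def walkValue (D : GraphDB Label Value) (wk : List D.V) : List (Label × Value) :=
  wk.filterMap fun x => (D.val x).map fun a => (D.lab x, a)

/-- A walk is informative iff it has no consecutive forward and backward
traverse from an entity node to a valueless node. -/
def Informative (D : GraphDB Label Value) (wk : List D.V) : Prop :=
  ¬ ∃ (l1 l2 : List D.V) (u x : D.V),
      D.isEntity u ∧ ¬ D.isEntity x ∧ wk = l1 ++ u :: x :: u :: l2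

/-- The walks of meta-walk `p` in `D`: informative walks that start and end
at entities and whose label sequence is `p`. -/
def goodWalksOf (D : GraphDB Label Value) (p : List Label) : Set (List D.V) :=
  { wk | D.IsWalk wk ∧ D.Informative wk ∧
        (∀ x, wk.head? = some x → D.isEntity x) ∧
        (∀ x, wk.getLast? = some x → D.isEntity x) ∧
        wk.map D.lab = p }

/-- Informative walks of meta-walk `p` from `e` to `f` in `D`. -/
def walksBetween (D : GraphDB Label Value) (p : List Label) (e f : D.V) :
    Set (List D.V) :=
  { wk ∈ D.goodWalksOf p | wk.head? = some e ∧ wk.getLast? = some f }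

/-- Plain walks of meta-walk `p` from `e` to `f` in `D`. -/
def plainWalksBetween (D : GraphDB Label Value) (p : List Label) (e f : D.V) :
    Set (List D.V) :=
  { wk | D.IsWalk wk ∧ wk.map D.lab = p ∧ wk.head? = some e ∧ wk.getLast? = some f }

/-- Content equivalence of walks (possibly in different databases): equal
value tuples. -/
def WalkContentEquiv (D1 D2 : GraphDB Label Value)
    (w1 : List D1.V) (w2 : List D2.V) : Prop :=
  D1.walkValue w1 = D2.walkValue w2

/-- Content equivalence of meta-walks: a bijection between the walk sets
preserving walk values. -/
def MWContentEquiv (D1 D2 : GraphDB Label Value) (p1 p2 : List Label) : Prop :=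
  ∃ M : ↥(D1.goodWalksOf p1) ≃ ↥(D2.goodWalksOf p2),
    ∀ wk : ↥(D1.goodWalksOf p1),
      D2.walkValue (M wk : List D2.V) = D1.walkValue (wk : List D1.V)

/-- Consecutive pairs of a list. -/
def pairsOf {α : Type*} (l : List α) : List (α × α) := l.zip l.tail

/-- `w` is a subwalk of `x`: a subsequence all of whose edges occur in `x`. -/
def Subwalk (D : GraphDB Label Value) (wk x : List D.V) : Prop :=
  wk.Sublist x ∧ ∀ pr ∈ pairsOf wk, pr ∈ pairsOf x

/-- First label in the list satisfying the entity-label predicate `EL`. -/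
noncomputable def firstEntityLabel (EL : Label → Prop) (xs : List Label) :
    Option Label :=
  xs.find? fun l => @decide (EL l) (Classical.propDecidable _)

/-- Meta-walk `p'` includes `p` in `D` (relative to the entity-label predicate
`EL`). -/
def Includes [DecidableEq Label] (EL : Label → Prop) (D : GraphDB Label Value)
    (p p' : List Label) : Prop :=
  (∃ M : ↥(D.goodWalksOf p) ≃ ↥(D.goodWalksOf p'),
      ∀ wk : ↥(D.goodWalksOf p),
        D.Subwalk (wk : List D.V) (M wk : List D.V) ∧
        (M wk : List D.V).head? = (wk : List D.V).head? ∧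
        (M wk : List D.V).getLast? = (wk : List D.V).getLast?) ∧
  ∃ l, EL l ∧ p.count l < p'.count l ∧
    ∃ a b, p' = a ++ l :: b ∧
      firstEntityLabel EL a.reverse ≠ some l ∧
      firstEntityLabel EL b ≠ some l

/-- A meta-walk is maximal in the set of databases `L` iff it has a walk in
some database of `L` and is not included in any other meta-walk. -/
def MaximalMW [DecidableEq Label] (EL : Label → Prop)
    (L : Set (GraphDB Label Value)) (p : List Label) : Prop :=
  (∃ D ∈ L, (D.goodWalksOf p).Nonempty) ∧
  ∀ p', p' ≠ p → ∀ D ∈ L, ¬ Includes EL D p p'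

/-- Relationship-reorganizing transformation: a bijection between maximal
meta-walks carrying each maximal meta-walk to a content-equivalent one. -/
def RelReorganizing [DecidableEq Label] (EL : Label → Prop)
    (T : GraphDB Label Value → GraphDB Label Value)
    (L K : Set (GraphDB Label Value)) : Prop :=
  (∀ D ∈ L, T D ∈ K) ∧
  ∃ M : {p : List Label // MaximalMW EL L p} ≃ {p : List Label // MaximalMW EL K p},
    ∀ p : {p : List Label // MaximalMW EL L p}, ∀ D ∈ L,
      MWContentEquiv D (T D) p.1 (M p).1

/-- Entity-preserving correspondence between two databases. -/
def EntityPreserving (D D' : GraphDB Label Value) : Prop :=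
  ∃ M : {x : D.V // D.isEntity x} ≃ {y : D'.V // D'.isEntity y},
    (∀ x, D'.val (M x).1 = D.val x.1) ∧
    ∀ x1 x2, D.lab x1.1 = D.lab x2.1 → D'.lab (M x1).1 = D'.lab (M x2).1

/-- Invertible transformation from `L` to `K` (isomorphic databases being
identified, the inverse recovers the original database). -/
def Invertible (T : GraphDB Label Value → GraphDB Label Value)
    (L K : Set (GraphDB Label Value)) : Prop :=
  (∀ D ∈ L, T D ∈ K) ∧
  ∃ T' : GraphDB Label Value → GraphDB Label Value,
    (∀ D' ∈ K, T' D' ∈ L) ∧ ∀ D ∈ L, T' (T D) = D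

/-- The set of databases `L` satisfies the FD `head p →_p last p`. -/
def SatFD (L : Set (GraphDB Label Value)) (p : List Label) : Prop :=
  ∀ D ∈ L, ∀ e f g : D.V,
    (D.plainWalksBetween p e f).Nonempty →
    (D.plainWalksBetween p e g).Nonempty → f = g

/-- The set of FDs (represented by their meta-walks) satisfied by `L`. -/
def FDset (L : Set (GraphDB Label Value)) : Set (List Label) :=
  { p | 2 ≤ p.length ∧ SatFD L p }

/-- The FD `l → l'` in a single database: every node of label `l` has at most
one neighbor of label `l'`. -/
def FD2 (D : GraphDB Label Value) (l l' : Label) : Prop :=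
  ∀ v u1 u2 : D.V, D.lab v = l → D.E v u1 → D.E v u2 →
    D.lab u1 = l' → D.lab u2 = l' → u1 = u2

/-- The PathSim score of `e` and `f` along meta-walk `p`. -/
noncomputable def pathSim (D : GraphDB Label Value) (p : List Label)
    (e f : D.V) : ℝ :=
  (2 * ((D.walksBetween p e f).ncard : ℝ)) /
    (((D.walksBetween p e e).ncard : ℝ) + ((D.walksBetween p f f).ncard : ℝ))

/-- Entity-rearranging transformation. -/
def EntityRearranging (T : GraphDB Label Value → GraphDB Label Value)
    (L K : Set (GraphDB Label Value)) : Prop :=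
  (∀ D ∈ L, T D ∈ K) ∧
  ∀ D ∈ L, ∃ M : D.V ≃ (T D).V,
    (∀ x, (T D).lab (M x) = D.lab x) ∧
    (∀ x, D.isEntity x → (T D).val (M x) = D.val x) ∧
    (∀ x1 x2 : D.V,
        [D.lab x1, D.lab x2] ∉ FDset L → [D.lab x2, D.lab x1] ∉ FDset L →
        (D.E x1 x2 ↔ (T D).E (M x1) (M x2))) ∧
    ∃ N : ↥(FDset L) ≃ ↥(FDset K),
      ∀ p : ↥(FDset L),
        ((N p : List Label).head? = (p : List Label).head?) ∧
        ((N p : List Label).getLast? = (p : List Label).getLast?) ∧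
        ∀ e f : D.V, D.isEntity e → D.isEntity f →
          (D.plainWalksBetween (p : List Label) e f = ∅ ↔
            (T D).plainWalksBetween (N p : List Label) (M e) (M f) = ∅)


lemma isWalk_iff (D : GraphDB Label Value) : ∀ (wk : List D.V),
    D.IsWalk wk ↔ wk ≠ [] ∧ wk.Chain' D.E
  | [] => by simp [IsWalk]
  | [x] => by simp [IsWalk]; exact List.isChain_singleton x
  | x :: y :: rest => by
    rw [IsWalk, isWalk_iff D (y :: rest)]; simp only [List.Chain']; rw [List.isChain_cons_cons]
    constructor
    · rintro ⟨h1, -, h2⟩; exact ⟨List.cons_ne_nil _ _, h1, h2⟩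
    · rintro ⟨-, h1, h2⟩; exact ⟨h1, List.cons_ne_nil _ _, h2⟩

lemma mem_plainWalksBetween {D : GraphDB Label Value} {p : List Label}
    {e f : D.V} {wk : List D.V} :
    wk ∈ D.plainWalksBetween p e f ↔
      D.IsWalk wk ∧ wk.map D.lab = p ∧ wk.head? = some e ∧
        wk.getLast? = some f := Iff.rfl

lemma plainWalksBetween_nil (D : GraphDB Label Value) (e f : D.V) :
    D.plainWalksBetween [] e f = ∅ := by
  ext wk
  simp only [mem_plainWalksBetween, Set.mem_empty_iff_false, iff_false]
  rintro ⟨h1, h2, -⟩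
  rw [List.map_eq_nil_iff] at h2
  subst h2
  exact h1

lemma concat_count (D : GraphDB Label Value) (P Q : List Label)
    (hjoin : Q.head? = P.getLast?) (e f : D.V)
    (hret : ∀ (e' : D.V) (wk : List D.V),
        wk ∈ D.plainWalksBetween P e e' → e' = e) :
    (D.plainWalksBetween (P ++ Q.tail) e f).ncard =
      (D.plainWalksBetween P e e).ncard * (D.plainWalksBetween Q e f).ncard := by
  rcases Q with _ | ⟨q0, Qt⟩
  · have hP : P = [] := by
      rw [← List.getLast?_eq_none_iff, ← hjoin]; rfl
    subst hP
    simp [plainWalksBetween_nil]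
  · have hq : P.getLast? = some q0 := hjoin.symm
    have hPne : P ≠ [] := by
      rintro rfl; simp at hq
    have hPsplit : P.dropLast ++ [q0] = P := List.dropLast_append_getLast? q0 hq
    set m : ℕ := P.dropLast.length with hm
    have hmP : m + 1 = P.length := by
      rw [hm, List.length_dropLast]
      have : 0 < P.length := List.length_pos_iff.2 hPne
      omega
    set j : List D.V × List D.V → List D.V := fun pr => pr.1 ++ pr.2.tail with hj
    have hinj : Set.InjOn j
        ((D.plainWalksBetween P e e) ×ˢ (D.plainWalksBetween (q0 :: Qt) e f)) := by
      rintro ⟨w1, w2⟩ ⟨⟨-, hl1, -, -⟩, ⟨-, hl2, hh2, -⟩⟩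
        ⟨w1', w2'⟩ ⟨⟨-, hl1', -, -⟩, ⟨-, hl2', hh2', -⟩⟩ heq
      simp only [hj] at heq
      have hlen : w1.length = w1'.length := by
        have e1 := congrArg List.length hl1
        have e2 := congrArg List.length hl1'
        simp only [List.length_map] at e1 e2
        omega
      obtain ⟨h1, h2⟩ := List.append_inj heq hlen
      rcases w2 with _ | ⟨a, t⟩; · simp at hh2
      rcases w2' with _ | ⟨a', t'⟩; · simp at hh2'
      simp only [List.head?_cons, Option.some.injEq] at hh2 hh2'
      simp only [List.tail_cons] at h2
      simp [Prod.ext_iff, h1, h2, hh2, hh2']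
    have key : D.plainWalksBetween (P ++ (q0 :: Qt).tail) e f =
        j '' ((D.plainWalksBetween P e e) ×ˢ (D.plainWalksBetween (q0 :: Qt) e f)) := by
      ext wk
      simp only [List.tail_cons, Set.mem_image, Set.mem_prod]
      constructor
      · rintro ⟨hw, hl, hh, hlast⟩
        rw [isWalk_iff] at hw
        obtain ⟨hne, hch⟩ := hw
        have hlen : wk.length = P.length + Qt.length := by
          have := congrArg List.length hl
          simpa using this
        have hmlt : m < wk.length := by omega
        set w1 : List D.V := wk.take (m + 1) with hw1
        set w2 : List D.V := wk.drop m with hw2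
        have hl1 : w1.map D.lab = P := by
          rw [hw1, List.map_take, hl, List.take_left' hmP.symm]
        have hl2 : w2.map D.lab = q0 :: Qt := by
          rw [hw2, List.map_drop, hl, ← hPsplit, List.append_assoc,
            List.singleton_append, List.drop_left' hm.symm]
        have hw1ne : w1 ≠ [] := by
          intro h
          rw [h] at hl1
          exact hPne hl1.symm
        have hw2ne : w2 ≠ [] := by
          intro h
          rw [h] at hl2
          exact List.cons_ne_nil _ _ hl2.symm
        have hsplit1 : w1 = wk.take m ++ [wk[m]] := by
          rw [hw1, List.take_succ, List.getElem?_eq_getElem hmlt]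
          rfl
        have hsplit2 : w2 = wk[m] :: wk.drop (m + 1) := by
          rw [hw2, List.drop_eq_getElem_cons hmlt]
        have hlast1 : w1.getLast? = some wk[m] := by
          rw [hsplit1]
          exact List.getLast?_concat
        have hhead2 : w2.head? = some wk[m] := by
          rw [hsplit2]; rfl
        have hhead1 : w1.head? = some e := by
          have : wk = w1 ++ wk.drop (m + 1) := by
            rw [hw1, List.take_append_drop]
          rw [this, List.head?_append_of_ne_nil _ hw1ne] at hh
          exact hh
        have hlast2 : w2.getLast? = some f := by
          have : wk = wk.take m ++ w2 := by
            rw [hw2, List.take_append_drop]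
          rw [this, List.getLast?_append_of_ne_nil _ hw2ne] at hlast
          exact hlast
        have hwalk1 : D.IsWalk w1 := (isWalk_iff D w1).2 ⟨hw1ne, hw1 ▸ hch.take _⟩
        have hwalk2 : D.IsWalk w2 := (isWalk_iff D w2).2 ⟨hw2ne, hw2 ▸ hch.drop _⟩
        have hmem1 : w1 ∈ D.plainWalksBetween P e wk[m] :=
          ⟨hwalk1, hl1, hhead1, hlast1⟩
        have hge : wk[m] = e := hret _ _ hmem1
        refine ⟨(w1, w2), ⟨⟨hwalk1, hl1, hhead1, hge ▸ hlast1⟩,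
          ⟨hwalk2, hl2, hge ▸ hhead2, hlast2⟩⟩, ?_⟩
        simp only [hj]
        rw [hw1, hw2, List.tail_drop, List.take_append_drop]
      · rintro ⟨⟨w1, w2⟩, ⟨⟨hwk1, hl1, hh1, hlast1⟩, ⟨hwk2, hl2, hh2, hlast2⟩⟩, rfl⟩
        simp only [hj]
        rw [isWalk_iff] at hwk1 hwk2
        obtain ⟨hne1, hch1⟩ := hwk1
        obtain ⟨hne2, hch2⟩ := hwk2
        rcases w2 with _ | ⟨a, t⟩; · simp at hh2
        dsimp only at hl1 hl2 hh2 hlast2 hne1 hch1 hne2 hch2 hh1 hlast1 ⊢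
        simp only [List.head?_cons, Option.some.injEq] at hh2
        subst hh2
        simp only [List.tail_cons]
        have hchain : (w1 ++ t).Chain' D.E := by
          simp only [List.Chain'] at hch1 hch2 ⊢; rw [List.isChain_append]
          refine ⟨hch1, hch2.tail, ?_⟩
          intro x hx y hy
          rw [hlast1] at hx
          simp only [Option.mem_def, Option.some.injEq] at hx
          subst hx
          rcases t with _ | ⟨b, t'⟩; · simp at hy
          simp only [List.head?_cons, Option.mem_def, Option.some.injEq] at hy
          subst hy
          exact (List.isChain_cons_cons.1 hch2).1
        refine ⟨(isWalk_iff D _).2 ⟨by simp [hne1], hchain⟩, ?_, ?_, ?_⟩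
        · rw [List.map_append, hl1]
          have : (t.map D.lab) = (((a :: t).map D.lab)).tail := rfl
          rw [this, hl2]
          rfl
        · rw [List.head?_append_of_ne_nil _ hne1, hh1]
        · rcases t with _ | ⟨b, t'⟩
          · simp only [List.append_nil]
            rw [hlast1]
            have : a = f := by simpa using hlast2
            rw [this]
          · rw [List.getLast?_append_of_ne_nil _ (List.cons_ne_nil b t')]
            rw [← List.getLast?_cons_cons (a := a)]
            exact hlast2
    rw [key, Set.ncard_image_of_injOn hinj]
    rw [← Nat.card_coe_set_eq, ← Nat.card_coe_set_eq,
      ← Nat.card_coe_set_eq, Nat.card_congr (Equiv.Set.prod _ _),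
      Nat.card_prod]

/-- Counting walks of the concatenation `s⁻¹ · s · r` from `e`
to `f`: provided every walk of `s⁻¹ · s` from `e` returns to `e` (which the
FDs `l_k → l_{k-1}, …, l_2 → l1` force), the count factors as
`|s⁻¹·s(e,e,D)| · |r(e,f,D)|`. -/
theorem star_concat_count (D : GraphDB Label Value) (s r : List Label)
    (hsymm : ∀ x y : D.V, D.E x y → D.E y x)
    (hFD : ∀ pr ∈ pairsOf s, FD2 D pr.2 pr.1)
    (hjoin : r.head? = s.getLast?)
    (e f : D.V)
    (hret : ∀ (e' : D.V) (wk : List D.V),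
        wk ∈ D.plainWalksBetween (s.reverse ++ s.tail) e e' → e' = e) :
    (D.plainWalksBetween (s.reverse ++ s.tail ++ r.tail) e f).ncard =
      (D.plainWalksBetween (s.reverse ++ s.tail) e e).ncard *
        (D.plainWalksBetween r e f).ncard := by
  have hlast : (s.reverse ++ s.tail).getLast? = s.getLast? := by
    rcases s with _ | ⟨a, t⟩
    · rfl
    · rcases t with _ | ⟨b, t'⟩
      · simp
      · rw [List.tail_cons, List.getLast?_append_of_ne_nil _ (List.cons_ne_nil b t'),
          List.getLast?_cons_cons]
  exact D.concat_count (s.reverse ++ s.tail) r (hjoin.trans hlast.symm) e f hret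


end GraphDB
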